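/- Suppose J′, J^Θ ⊆ ℤ/fℤ satisfy Σ(s(b′,J′)) ≡ Σ(s(b^Θ,J^Θ)) (mod p^f − 1) and Σ(t(b′,J′)) ≡ Σ(t(b^Θ,J^Θ)) (mod p^f − 1). Then there exists J ⊆ ℤ/fℤ such that i ∈ J ⟺ i ∈ J′ for all i ∉ J₀, and Σ(s(b,J)) ≡ Σ(s(b′,J′)) (mod p^f − 1) and Σ(t(b,J)) ≡ Σ(t(b′,J′)) (mod p^f − 1). -/

import Mathlib

open scoped Classical
noncomputable section

/-- `Σ(v) = Σ_{i=0}^{f−1} v_i · p^{f−1−i}`. -/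
def Sig (p f : ℕ) (v : ZMod f → ℤ) : ℤ :=
  ∑ i ∈ Finset.range f, v (i : ZMod f) * (p : ℤ) ^ (f - 1 - i)

/-- `A_i(c,d) = Σ_{j=1}^{f} p^{f−j} · (c_{i+j} − d_{i+j})`. -/
def Ai (p f : ℕ) (c d : ZMod f → ℤ) (i : ZMod f) : ℤ :=
  ∑ j ∈ Finset.Icc 1 f, (p : ℤ) ^ (f - j) * (c (i + (j : ZMod f)) - d (i + (j : ZMod f)))

/-- `T_ν`: the maximal run of indices with `k`-value 1 following `ν`. -/
def Trun (f : ℕ) (k : ZMod f → ℤ) (ν : ZMod f) : Set (ZMod f) :=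
  {i | ∃ s : ℕ, 1 ≤ s ∧ i = ν + (s : ZMod f) ∧
        ∀ j : ℕ, 1 ≤ j → j ≤ s → k (ν + (j : ZMod f)) = 1}

/-- `b_{i,1} = k_i − 1`. -/
def b1 (f : ℕ) (k : ZMod f → ℤ) : ZMod f → ℤ := fun i => k i - 1

/-- the constantly zero second component. -/
def zero2 (f : ℕ) : ZMod f → ℤ := fun _ => 0

/-- `b′_{i,1}`. -/
def bp1 (p f : ℕ) (k : ZMod f → ℤ) : ZMod f → ℤ := fun i =>
  if k i = 1 then (if k (i + 1) = 1 then (p : ℤ) - 1 else (p : ℤ))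
  else (if k (i + 1) = 1 then k i - 2 else k i - 1)

/-- `b^μ_{i,1}`. -/
def bmu1 (p f : ℕ) (k : ZMod f → ℤ) (μ : ZMod f) : ZMod f → ℤ := fun i =>
  if i = μ then k μ - 1 else bp1 p f k i

/-- `b^μ_{i,2}`. -/
def bmu2 (f : ℕ) (μ : ZMod f) : ZMod f → ℤ := fun i => if i = μ then -1 else 0

/-- `b^Θ_{i,1}`. -/
def bth1 (p f : ℕ) (k : ZMod f → ℤ) : ZMod f → ℤ := fun i =>
  if k i = 1 then (if k (i + 1) = 1 then (p : ℤ) - 1 else (p : ℤ)) else k i - 1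

/-- `b^Θ_{i,2}`. -/
def bth2 (f : ℕ) (k : ZMod f → ℤ) : ZMod f → ℤ := fun i =>
  if k i ≠ 1 ∧ k (i + 1) = 1 then -1 else 0

/-- `s_i(c,S) = c_{i,1}` if `i ∈ S`, else `c_{i,2}`. -/
def sW (f : ℕ) (c1 c2 : ZMod f → ℤ) (S : Set (ZMod f)) : ZMod f → ℤ :=
  fun i => if i ∈ S then c1 i else c2 i

/-- `t_i(c,S) = c_{i,2}` if `i ∈ S`, else `c_{i,1}`. -/
def tW (f : ℕ) (c1 c2 : ZMod f → ℤ) (S : Set (ZMod f)) : ZMod f → ℤ :=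
  fun i => if i ∈ S then c2 i else c1 i

/-- The set `𝒫′` of Definition 3.7 of the paper. -/
def memP' (p f : ℕ) (r : ZMod f → ℤ) : Prop :=
  (∀ i, r i = 0 ∨ r i = 1 ∨ r i = (p : ℤ) - 1 ∨ r i = (p : ℤ)) ∧
  (∀ i, r i = (p : ℤ) → (r (i + 1) = 0 ∨ r (i + 1) = 1)) ∧
  (∀ i, (r i = 1 ∨ r i = (p : ℤ) - 1) → (r (i + 1) = (p : ℤ) - 1 ∨ r (i + 1) = (p : ℤ))) ∧
  (∀ i, r i = 0 →
    ((∀ j, r j = 0) ∨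
      ∃ s t : ℕ, 1 ≤ s ∧ 1 ≤ t ∧
        (∀ j : ℕ, 1 ≤ j → j ≤ s - 1 → r (i + (j : ZMod f)) = 0) ∧
        r (i + (s : ZMod f)) = 1 ∧
        (∀ j : ℕ, 1 ≤ j → j ≤ t - 1 → r (i - (j : ZMod f)) = 0) ∧
        r (i - (t : ZMod f)) = (p : ℤ)))

/-- The exceptional case of Theorem 3.9 of the paper. -/
def Exceptional (p f : ℕ) (r : ZMod f → ℤ) (J : Set (ZMod f)) : Prop :=
  memP' p f r ∧ (∀ i, (r i = (p : ℤ) - 1 ∨ r i = (p : ℤ)) → i ∈ J) ∧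
    (∀ i, r i = 1 → i ∉ J)

namespace SigAux


lemma Sig_sub (p f : ℕ) (v w : ZMod f → ℤ) :
    Sig p f v - Sig p f w = Sig p f (fun i => v i - w i) := by
  simp [Sig, sub_mul, Finset.sum_sub_distrib]

lemma Sig_add (p f : ℕ) (v w : ZMod f → ℤ) :
    Sig p f (fun i => v i + w i) = Sig p f v + Sig p f w := by
  simp [Sig, add_mul, Finset.sum_add_distrib]

lemma Sig_mul (p f : ℕ) (c : ℤ) (v : ZMod f → ℤ) :
    Sig p f (fun i => c * v i) = c * Sig p f v := by
  simp [Sig, Finset.mul_sum, mul_assoc]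

lemma Sig_shift (p f : ℕ) (hf : 1 ≤ f) (v : ZMod f → ℤ) :
    (p:ℤ) * Sig p f v = Sig p f (fun i => v (i + 1)) + ((p:ℤ)^f - 1) * v 0 := by
  obtain ⟨n, rfl⟩ : ∃ n, f = n + 1 := ⟨f - 1, by omega⟩
  have h1 : (p:ℤ) * Sig p (n+1) v = ∑ i ∈ Finset.range (n+1), v (i : ZMod (n+1)) * (p:ℤ) ^ (n + 1 - i) := by
    rw [Sig, Finset.mul_sum]
    refine Finset.sum_congr rfl fun i hi => ?_
    have hi' : i ≤ n := by simpa [Nat.lt_succ_iff] using hi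
    have : n + 1 - i = (n + 1 - 1 - i) + 1 := by omega
    rw [this, pow_succ]
    ring
  rw [h1, Finset.sum_range_succ' (fun i => v (i : ZMod (n+1)) * (p:ℤ) ^ (n + 1 - i)) n]
  rw [Sig, Finset.sum_range_succ (fun i => v ((i : ZMod (n+1)) + 1) * (p:ℤ) ^ (n + 1 - 1 - i)) n]
  have e1 : ∀ i ∈ Finset.range n, v (((i+1 : ℕ)) : ZMod (n+1)) * (p:ℤ) ^ (n + 1 - (i+1))
      = v ((i : ZMod (n+1)) + 1) * (p:ℤ) ^ (n + 1 - 1 - i) := by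
    intro i hi
    have : ((i+1 : ℕ) : ZMod (n+1)) = (i : ZMod (n+1)) + 1 := by push_cast; ring
    rw [this]
    congr 2
    omega
  rw [Finset.sum_congr rfl e1]
  have e2 : ((n : ZMod (n+1)) + 1) = 0 := by
    have : ((n+1 : ℕ) : ZMod (n+1)) = 0 := ZMod.natCast_self (n+1)
    push_cast at this; linear_combination (this : _)
  have e3 : ((0:ℕ) : ZMod (n+1)) = 0 := by norm_num
  rw [e2, e3]
  rw [show n+1-0 = n+1 by omega, show n+1-1-n = 0 by omega]
  ring

lemma Sig_shift_modeq (p f : ℕ) (hf : 1 ≤ f) (v : ZMod f → ℤ) :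
    Int.ModEq ((p:ℤ)^f - 1) (Sig p f (fun i => v (i + 1))) ((p:ℤ) * Sig p f v) := by
  have h := Sig_shift p f hf v
  have : (p:ℤ) * Sig p f v - Sig p f (fun i => v (i + 1)) = ((p:ℤ)^f - 1) * v 0 := by
    linarith
  exact (Int.modEq_iff_dvd.mpr ⟨v 0, by linarith⟩)

set_option maxHeartbeats 1000000 in
lemma Sig_shift_pow (p f : ℕ) (hf : 1 ≤ f) (m : ℕ) (v : ZMod f → ℤ) :
    Int.ModEq ((p:ℤ)^f - 1) (Sig p f (fun i => v (i + (m : ZMod f)))) ((p:ℤ)^m * Sig p f v) := by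
  induction m with
  | zero => simp [Int.ModEq.refl]
  | succ m ih =>
    have h1 : Sig p f (fun i : ZMod f => v (i + ((m+1 : ℕ) : ZMod f))) =
        Sig p f (fun i : ZMod f => (fun j : ZMod f => v (j + (m : ZMod f))) (i + 1)) := by
      unfold Sig
      refine Finset.sum_congr rfl fun i _ => ?_
      simp only []
      congr 2
      push_cast
      ring
    rw [h1]
    calc Sig p f (fun i : ZMod f => (fun j : ZMod f => v (j + (m : ZMod f))) (i + 1))
        ≡ (p:ℤ) * Sig p f (fun j => v (j + (m : ZMod f))) [ZMOD ((p:ℤ)^f - 1)] :=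
          Sig_shift_modeq p f hf (fun j => v (j + (m : ZMod f)))
      _ ≡ (p:ℤ) * ((p:ℤ)^m * Sig p f v) [ZMOD ((p:ℤ)^f - 1)] := ih.mul_left _
      _ = (p:ℤ)^(m+1) * Sig p f v := by ring



lemma geom_Icc (p f m : ℕ) :
    (∑ j ∈ Finset.Icc m f, (p:ℤ)^(f-j)) * ((p:ℤ)-1) = (p:ℤ)^(f+1-m) - 1 := by
  rw [← Finset.Ico_add_one_right_eq_Icc, Finset.sum_Ico_eq_sum_range]
  have h1 : ∀ i ∈ Finset.range (f+1-m), (p:ℤ)^(f-(m+i)) = (p:ℤ)^((f+1-m) - 1 - i) := by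
    intro i hi
    simp only [Finset.mem_range] at hi
    congr 1
    omega
  rw [Finset.sum_congr rfl h1, Finset.sum_range_reflect (fun i => (p:ℤ)^i) (f+1-m),
    geom_sum_mul]

lemma block_zero (p f : ℕ) (hp3 : 3 ≤ (p:ℤ)) (hf : 1 ≤ f)
    (z : ZMod f → ℤ)
    (hz : Int.ModEq ((p:ℤ)^f - 1) (Sig p f z) 0)
    (hbd : ∀ i, |z i| ≤ (p:ℤ))
    (ν : ZMod f) (s : ℕ) (hs1 : 1 ≤ s) (hsf : s + 1 ≤ f)
    (hend : z (ν + ((s:ℕ) : ZMod f)) = 0)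
    (hint : ∀ u : ℕ, 1 ≤ u → u ≤ s - 1 → |z (ν + ((u:ℕ) : ZMod f))| ≤ 2) :
    (∀ u : ℕ, 1 ≤ u → u ≤ s - 1 → z (ν + ((u:ℕ) : ZMod f)) = 0) ∧
    ∃ g : ℤ, |g| ≤ 1 ∧ z ν = (p:ℤ) * g := by
  haveI : NeZero f := ⟨by omega⟩
  have hp0 : (0:ℤ) < (p:ℤ) := by linarith
  set i₀ : ZMod f := ν + ((s-1 : ℕ) : ZMod f) with hi₀
  set z' : ℕ → ℤ := fun j => z (i₀ + (j : ZMod f)) with hz'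
  -- position bookkeeping
  have posfact : ∀ t : ℕ, t ≤ s - 1 → i₀ + ((f - t : ℕ) : ZMod f) = ν + ((s-1-t : ℕ) : ZMod f) := by
    intro t ht
    have harith : (s - 1 : ℕ) + (f - t) = (s - 1 - t) + f := by omega
    have : ((s-1 : ℕ) : ZMod f) + ((f - t : ℕ) : ZMod f) = ((s-1-t : ℕ) : ZMod f) := by
      rw [← Nat.cast_add, harith, Nat.cast_add, ZMod.natCast_self, add_zero]
    rw [hi₀, add_assoc, this]
  have z'def : ∀ j : ℕ, z' j = z (i₀ + (j : ZMod f)) := fun _ => rfl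
  have z'1 : z' 1 = 0 := by
    have h0 : i₀ + ((1:ℕ) : ZMod f) = ν + ((s:ℕ) : ZMod f) := by
      rw [hi₀, add_assoc, ← Nat.cast_add, show s - 1 + 1 = s by omega]
    rw [z'def, h0]; exact hend
  -- the rooted sum W
  set W : ℤ := ∑ j ∈ Finset.Icc 1 f, z' j * (p:ℤ)^(f-j) with hW
  have hWsig : W = Sig p f (fun i => z (i + (i₀ + 1))) := by
    rw [hW, Sig, ← Finset.Ico_add_one_right_eq_Icc, Finset.sum_Ico_eq_sum_range]
    simp only [show f + 1 - 1 = f by omega]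
    refine Finset.sum_congr rfl fun i hi => ?_
    have e1 : z' (1 + i) = z ((i : ZMod f) + (i₀ + 1)) := by
      rw [z'def]
      congr 1
      push_cast
      ring
    rw [e1, show f - (1+i) = f - 1 - i by omega]
  have hWmod : Int.ModEq ((p:ℤ)^f - 1) W 0 := by
    set m : ℕ := (i₀ + 1).val with hm
    have hcast : ((m : ℕ) : ZMod f) = i₀ + 1 := ZMod.natCast_zmod_val _
    have h2 : W = Sig p f (fun i => z (i + ((m : ℕ) : ZMod f))) := by rw [hWsig, hcast]
    rw [h2]
    calc Sig p f (fun i => z (i + ((m : ℕ) : ZMod f)))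
        ≡ (p:ℤ)^m * Sig p f z [ZMOD ((p:ℤ)^f - 1)] := Sig_shift_pow p f hf m z
      _ ≡ (p:ℤ)^m * 0 [ZMOD ((p:ℤ)^f - 1)] := hz.mul_left _
      _ = 0 := by ring
  -- W = 0
  have hQ1 : (1:ℤ) ≤ (p:ℤ)^(f-1) := one_le_pow₀ (by linarith : (1:ℤ) ≤ (p:ℤ))
  have hWabs : |W| * ((p:ℤ) - 1) ≤ (p:ℤ) * ((p:ℤ)^(f-1) - 1) := by
    have h3 : |W| ≤ ∑ j ∈ Finset.Icc 1 f, |z' j * (p:ℤ)^(f-j)| := by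
      rw [hW]; exact Finset.abs_sum_le_sum_abs _ _
    have hsplit : Finset.Icc 1 f = Finset.cons 1 (Finset.Ioc 1 f) (by simp) :=
      Finset.Icc_eq_cons_Ioc hf
    have h4 : ∑ j ∈ Finset.Icc 1 f, |z' j * (p:ℤ)^(f-j)|
        ≤ ∑ j ∈ Finset.Icc 2 f, (p:ℤ) * (p:ℤ)^(f-j) := by
      rw [hsplit, Finset.sum_cons, z'1, show Finset.Ioc 1 f = Finset.Icc 2 f from (Finset.Icc_add_one_left_eq_Ioc 1 f).symm]
      simp only [zero_mul, abs_zero, zero_add]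
      refine Finset.sum_le_sum fun j hj => ?_
      rw [abs_mul, abs_pow, abs_of_nonneg (le_of_lt hp0)]
      exact mul_le_mul_of_nonneg_right (hbd _) (pow_nonneg (le_of_lt hp0) _)
    have h5 : (∑ j ∈ Finset.Icc 2 f, (p:ℤ) * (p:ℤ)^(f-j)) * ((p:ℤ)-1)
        = (p:ℤ) * ((p:ℤ)^(f-1) - 1) := by
      rw [← Finset.mul_sum, mul_assoc, geom_Icc p f 2, show f+1-2 = f-1 by omega]
    nlinarith [pow_nonneg (le_of_lt hp0) (f-1)]
  have hpf : (p:ℤ)^f = (p:ℤ)^(f-1) * (p:ℤ) := by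
    rw [← pow_succ]; congr 1; omega
  have hW0 : W = 0 := by
    have hdvd : ((p:ℤ)^f - 1) ∣ W := by
      have h6 := Int.ModEq.dvd hWmod
      simpa using h6
    have habs : |W| < (p:ℤ)^f - 1 := by nlinarith [abs_nonneg W]
    exact Int.eq_zero_of_abs_lt_dvd hdvd habs
  -- suffix sums and carries
  set T : ℕ → ℤ := fun j => ∑ l ∈ Finset.Ioc j f, z' l * (p:ℤ)^(f-l) with hT
  have Tdef : ∀ j : ℕ, T j = ∑ l ∈ Finset.Ioc j f, z' l * (p:ℤ)^(f-l) := fun _ => rfl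
  have hT0 : T 0 = 0 := by
    rw [Tdef, ← Finset.Icc_add_one_left_eq_Ioc 0 f, zero_add, ← hW]
    exact hW0
  have hTsplit : ∀ j : ℕ, j ≤ f → T 0 = (∑ l ∈ Finset.Ioc 0 j, z' l * (p:ℤ)^(f-l)) + T j := by
    intro j hj
    rw [Tdef, Tdef]
    rw [Finset.sum_Ioc_consecutive _ (Nat.zero_le j) hj]
  have hTdvd : ∀ j : ℕ, j ≤ f → (p:ℤ)^(f-j) ∣ T j := by
    intro j hj
    have h7 : T j = -(∑ l ∈ Finset.Ioc 0 j, z' l * (p:ℤ)^(f-l)) := by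
      have := hTsplit j hj
      rw [hT0] at this
      linarith
    rw [h7]
    refine dvd_neg.mpr (Finset.dvd_sum fun l hl => ?_)
    simp only [Finset.mem_Ioc] at hl
    exact Dvd.dvd.mul_left (pow_dvd_pow _ (by omega)) _
  set γ : ℕ → ℤ := fun j => T j / (p:ℤ)^(f-j) with hγ
  have hpow0 : ∀ j : ℕ, (p:ℤ)^(f-j) ≠ 0 := fun j => pow_ne_zero _ (by linarith)
  have γdef : ∀ j : ℕ, γ j = T j / (p:ℤ)^(f-j) := fun _ => rfl
  have hTγ : ∀ j : ℕ, j ≤ f → T j = γ j * (p:ℤ)^(f-j) := by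
    intro j hj
    rw [γdef]
    exact (Int.ediv_mul_cancel (hTdvd j hj)).symm
  have hγf : γ f = 0 := by
    rw [γdef, Tdef]
    simp
  have hγbd : ∀ j : ℕ, j ≤ f → |γ j| ≤ 1 := by
    intro j hj
    have h8 : |T j| ≤ ∑ l ∈ Finset.Icc (j+1) f, (p:ℤ) * (p:ℤ)^(f-l) := by
      calc |T j| ≤ ∑ l ∈ Finset.Ioc j f, |z' l * (p:ℤ)^(f-l)| := by
            rw [Tdef]; exact Finset.abs_sum_le_sum_abs _ _
        _ = ∑ l ∈ Finset.Icc (j+1) f, |z' l * (p:ℤ)^(f-l)| := by rw [Finset.Icc_add_one_left_eq_Ioc]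
        _ ≤ _ := by
            refine Finset.sum_le_sum fun l hl => ?_
            rw [abs_mul, abs_pow, abs_of_nonneg (le_of_lt hp0)]
            exact mul_le_mul_of_nonneg_right (hbd _) (pow_nonneg (le_of_lt hp0) _)
    have h9 : (∑ l ∈ Finset.Icc (j+1) f, (p:ℤ) * (p:ℤ)^(f-l)) * ((p:ℤ)-1)
        = (p:ℤ) * ((p:ℤ)^(f-j) - 1) := by
      rw [← Finset.mul_sum, mul_assoc, geom_Icc p f (j+1), show f+1-(j+1) = f-j by omega]
    have h10 : (1:ℤ) ≤ (p:ℤ)^(f-j) := one_le_pow₀ (by linarith : (1:ℤ) ≤ (p:ℤ))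
    have h11 : |T j| = |γ j| * (p:ℤ)^(f-j) := by
      rw [hTγ j hj, abs_mul, abs_pow, abs_of_nonneg (le_of_lt hp0)]
    by_contra hcon
    push_neg at hcon
    have h12 : (2:ℤ) ≤ |γ j| := by omega
    have e1 : |T j| * ((p:ℤ)-1) ≤ (p:ℤ) * ((p:ℤ)^(f-j) - 1) := by
      rw [← h9]; exact mul_le_mul_of_nonneg_right h8 (by linarith)
    rw [h11] at e1
    have hQnn : (0:ℤ) ≤ (p:ℤ)^(f-j) * ((p:ℤ)-1) := by
      apply mul_nonneg (pow_nonneg (le_of_lt hp0) _); linarith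
    nlinarith [mul_nonneg (by linarith : (0:ℤ) ≤ (p:ℤ)-3) (by linarith : (0:ℤ) ≤ (p:ℤ)^(f-j)), mul_le_mul_of_nonneg_right h12 hQnn]
  have hrel : ∀ j : ℕ, 1 ≤ j → j ≤ f → z' j = (p:ℤ) * γ (j-1) - γ j := by
    intro j hj1 hjf
    have h13 : T (j-1) = z' j * (p:ℤ)^(f-j) + T j := by
      rw [Tdef, Tdef]
      rw [show Finset.Ioc (j-1) f = Finset.Icc j f by rw [← Finset.Icc_add_one_left_eq_Ioc]; congr 1; omega]
      rw [Finset.Icc_eq_cons_Ioc hjf, Finset.sum_cons]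
    have h14 : γ (j-1) * ((p:ℤ) * (p:ℤ)^(f-j)) = (z' j + γ j) * (p:ℤ)^(f-j) := by
      have h15 : T (j-1) = γ (j-1) * (p:ℤ)^(f-(j-1)) := hTγ (j-1) (by omega)
      have h16 : (p:ℤ)^(f-(j-1)) = (p:ℤ) * (p:ℤ)^(f-j) := by
        rw [← pow_succ']; congr 1; omega
      rw [h15, h16, hTγ j hjf] at h13
      linarith
    have h17 := mul_right_cancel₀ (hpow0 j) (by linarith [h14] : (γ (j-1) * (p:ℤ)) * (p:ℤ)^(f-j) = (z' j + γ j) * (p:ℤ)^(f-j))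
    linarith
  -- downward induction through the run
  have claim : ∀ t : ℕ, t ≤ s - 1 → γ (f - t) = 0 := by
    intro t
    induction t with
    | zero => intro _; simpa using hγf
    | succ t ih =>
      intro ht
      have ih' := ih (by omega)
      have hz'ft : z' (f - t) = (p:ℤ) * γ (f - (t+1)) - γ (f - t) := by
        have := hrel (f - t) (by omega) (by omega)
        rw [show f - t - 1 = f - (t+1) by omega] at this
        exact this
      have hpos : z' (f - t) = z (ν + ((s-1-t : ℕ) : ZMod f)) := by
        rw [z'def, posfact t (by omega)]
      have hu : |z (ν + ((s-1-t : ℕ) : ZMod f))| ≤ 2 := hint (s-1-t) (by omega) (by omega)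
      have hγsmall := hγbd (f - (t+1)) (by omega)
      have h18 : γ (f - (t+1)) = -1 ∨ γ (f - (t+1)) = 0 ∨ γ (f - (t+1)) = 1 := by
        rw [abs_le] at hγsmall; omega
      rw [ih', hpos] at hz'ft
      rw [abs_le] at hu
      rcases h18 with h|h|h
      · rw [h] at hz'ft; exfalso; linarith
      · exact h
      · rw [h] at hz'ft; exfalso; linarith
  constructor
  · -- interior vanishing
    intro u hu1 hu2
    have ht1 := claim (s-1-u) (by omega)
    have ht2 := claim (s-1-u+1) (by omega)
    have h19 := hrel (f - (s-1-u)) (by omega) (by omega)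
    rw [show f - (s-1-u) - 1 = f - (s-1-u+1) by omega] at h19
    rw [ht1, ht2] at h19
    have hpos : z' (f - (s-1-u)) = z (ν + ((u : ℕ) : ZMod f)) := by
      rw [z'def, posfact (s-1-u) (by omega), show s-1-(s-1-u) = u by omega]
    rw [hpos] at h19
    linarith
  · -- the value at ν
    have ht3 := claim (s-1) (by omega)
    have h20 := hrel (f - (s-1)) (by omega) (by omega)
    rw [show f - (s-1) - 1 = f - s by omega] at h20
    rw [ht3] at h20
    have hpos : z' (f - (s-1)) = z ν := by
      rw [z'def, posfact (s-1) (by omega), show s-1-(s-1) = 0 by omega]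
      simp
    rw [hpos] at h20
    exact ⟨γ (f - s), hγbd (f-s) (by omega), by linarith⟩




lemma Sig_carry (p f : ℕ) (hf : 1 ≤ f) (w : ZMod f → ℤ) :
    Sig p f (fun i => (p:ℤ) * w i - w (i + 1)) = ((p:ℤ)^f - 1) * w 0 := by
  have h1 := Sig_shift p f hf w
  have h2 : Sig p f (fun i => (p:ℤ) * w i - w (i+1))
      = (p:ℤ) * Sig p f w - Sig p f (fun i => w (i+1)) := by
    rw [← Sig_mul p f (p:ℤ) w, Sig_sub]
  rw [h2]; linarith

lemma nu_case (p : ℕ) (hp3 : 3 ≤ (p:ℤ)) (K A B A' B' g : ℤ)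
    (hK3 : 3 ≤ K) (hKp : K ≤ (p:ℤ))
    (hA : A = 0 ∨ A = 1) (hB : B = 0 ∨ B = 1)
    (hA' : A' = 0 ∨ A' = 1) (hB' : B' = 0 ∨ B' = 1)
    (hg : |g| ≤ 1)
    (heq : (A - B) * (K - 2) + (1 - 2*B) + (A' - B') = (p:ℤ) * g) :
    A = A' ∧ A' ≠ B' := by
  have hg' : g = -1 ∨ g = 0 ∨ g = 1 := by rw [abs_le] at hg; omega
  rcases hA with rfl|rfl <;> rcases hB with rfl|rfl <;>
    rcases hA' with rfl|rfl <;> rcases hB' with rfl|rfl <;>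
    rcases hg' with rfl|rfl|rfl <;>
    constructor <;> omega



/-- indicator -/
def aI (f : ℕ) (S : Set (ZMod f)) : ZMod f → ℤ := fun i => if i ∈ S then 1 else 0

def dI (f : ℕ) (J' JTh : Set (ZMod f)) : ZMod f → ℤ := fun i => aI f J' i - aI f JTh i

def wFun (f : ℕ) (k : ZMod f → ℤ) (J' JTh : Set (ZMod f)) : ZMod f → ℤ :=
  fun i => if k i = 1 then dI f J' JTh i else 0

def zFun (p f : ℕ) (k : ZMod f → ℤ) (J' JTh : Set (ZMod f)) : ZMod f → ℤ := fun i =>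
  if k i = 1 then (if k (i + 1) = 1 then dI f J' JTh (i+1) - dI f J' JTh i else 0)
  else (if k (i + 1) = 1 then
      dI f J' JTh i * (k i - 2) + (1 - 2 * aI f JTh i) + dI f J' JTh (i+1)
    else dI f J' JTh i * (k i - 1))

lemma hpoint (p f : ℕ) (k : ZMod f → ℤ) (J' JTh : Set (ZMod f)) (i : ZMod f) :
    sW f (bp1 p f k) (zero2 f) J' i - sW f (bth1 p f k) (bth2 f k) JTh i
      = zFun p f k J' JTh i + ((p:ℤ) * wFun f k J' JTh i - wFun f k J' JTh (i+1)) := by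
  by_cases h1 : k i = 1 <;> by_cases h2 : k (i+1) = 1 <;>
    by_cases h3 : i ∈ J' <;> by_cases h4 : i ∈ JTh <;>
    simp only [sW, zero2, bp1, bth1, bth2, zFun, wFun, dI, aI, h1, h2, h3, h4, if_true,
      if_false, ne_eq, not_true_eq_false, not_false_eq_true, true_and, false_and, ite_true,
      ite_false, if_pos, if_neg, not_not] <;>
    ring

lemma hzbd (p f : ℕ) (hp3 : 3 ≤ (p:ℤ)) (k : ZMod f → ℤ)
    (hk : ∀ i, 1 ≤ k i ∧ k i ≤ (p : ℤ)) (J' JTh : Set (ZMod f)) (i : ZMod f) :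
    |zFun p f k J' JTh i| ≤ (p:ℤ) := by
  obtain ⟨hk1, hk2⟩ := hk i
  rw [abs_le]
  by_cases h1 : k i = 1 <;> by_cases h2 : k (i+1) = 1 <;>
    by_cases h3 : i ∈ J' <;> by_cases h4 : i ∈ JTh <;>
    by_cases h5 : i+1 ∈ J' <;> by_cases h6 : i+1 ∈ JTh <;>
    simp only [zFun, dI, aI, h1, h2, h3, h4, h5, h6, if_true, if_false, ite_true, ite_false,
      if_pos, if_neg] <;>
    constructor <;> omega

lemma key2 (p f : ℕ) (hf : 1 ≤ f) (k : ZMod f → ℤ) (A : ZMod f → ℤ)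
    (hiff : ∀ i, k (i+1) = 1 → A (i+1) = A i) :
    Sig p f (fun i => A i * (bp1 p f k i - b1 f k i))
      = ((p:ℤ)^f - 1) * (if k 0 = 1 then A 0 else 0) := by
  have hpt : ∀ i, A i * (bp1 p f k i - b1 f k i)
      = (p:ℤ) * (if k i = 1 then A i else 0) - (if k (i+1) = 1 then A (i+1) else 0) := by
    intro i
    by_cases h1 : k i = 1 <;> by_cases h2 : k (i+1) = 1 <;>
      simp only [bp1, b1, h1, h2, if_true, if_false, ite_true, ite_false, if_pos, if_neg] <;>
      first
        | (rw [hiff i h2]; ring)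
        | ring
  have h3 : (fun i => A i * (bp1 p f k i - b1 f k i))
      = fun i => (p:ℤ) * (if k i = 1 then A i else 0) - (if k (i+1) = 1 then A (i+1) else 0) := by
    funext i; exact hpt i
  rw [h3]
  exact Sig_carry p f hf (fun i => if k i = 1 then A i else 0)



lemma main_key (p f : ℕ) (hp3 : 3 ≤ (p:ℤ)) (hf : 1 ≤ f)
    (k : ZMod f → ℤ) (hk : ∀ i, 1 ≤ k i ∧ k i ≤ (p:ℤ)) (hnotone : ∃ i, k i ≠ 1)
    (h21 : ∀ i, ¬(k i = 2 ∧ k (i + 1) = 1))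
    (J' JTh : Set (ZMod f))
    (hz0 : Int.ModEq ((p:ℤ)^f - 1) (Sig p f (zFun p f k J' JTh)) 0)
    (i : ZMod f) (hi : k (i+1) = 1) :
    aI f J' i = aI f J' (i+1) := by
  haveI : NeZero f := ⟨by omega⟩
  set a := aI f J' with ha
  set bb := aI f JTh with hbb
  set d := dI f J' JTh with hd
  set z := zFun p f k J' JTh with hz
  have habit : ∀ x : ZMod f, a x = 0 ∨ a x = 1 := by
    intro x; by_cases h : x ∈ J' <;> simp [ha, aI, h]
  have hbbit : ∀ x : ZMod f, bb x = 0 ∨ bb x = 1 := by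
    intro x; by_cases h : x ∈ JTh <;> simp [hbb, aI, h]
  have hdab : ∀ x : ZMod f, d x = a x - bb x := fun x => rfl
  have hdabs : ∀ x : ZMod f, |d x| ≤ 1 := by
    intro x
    rcases habit x with h1|h1 <;> rcases hbbit x with h2|h2 <;>
      rw [abs_le] <;> constructor <;> rw [hdab, h1, h2] <;> norm_num
  -- unfolding lemmas for z
  have zint : ∀ x : ZMod f, k x = 1 → k (x+1) = 1 → z x = d (x+1) - d x := by
    intro x h1 h2; simp [hz, zFun, h1, h2, hd]
  have zend : ∀ x : ZMod f, k x = 1 → k (x+1) ≠ 1 → z x = 0 := by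
    intro x h1 h2; simp [hz, zFun, h1, h2]
  have znu : ∀ x : ZMod f, k x ≠ 1 → k (x+1) = 1 →
      z x = d x * (k x - 2) + (1 - 2 * bb x) + d (x+1) := by
    intro x h1 h2; simp [hz, zFun, h1, h2, hd, hbb]
  -- construct the block around i
  obtain ⟨i₂, hi₂⟩ := hnotone
  have hPex : ∃ t : ℕ, k (i + 1 - ((t:ℕ) : ZMod f)) ≠ 1 := by
    refine ⟨(i + 1 - i₂).val, ?_⟩
    rw [ZMod.natCast_zmod_val]
    simpa using hi₂
  set m := Nat.find hPex with hm
  have hmspec : k (i + 1 - ((m:ℕ) : ZMod f)) ≠ 1 := Nat.find_spec hPex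
  have hmmin : ∀ t : ℕ, t < m → k (i + 1 - ((t:ℕ) : ZMod f)) = 1 := by
    intro t ht
    have := Nat.find_min hPex ht
    simpa using this
  have hm1 : 1 ≤ m := by
    rcases Nat.eq_zero_or_pos m with h|h
    · exfalso; apply hmspec; rw [h]; simpa using hi
    · exact h
  set ν : ZMod f := i + 1 - ((m:ℕ) : ZMod f) with hν
  have hQex : ∃ q : ℕ, k (i + 1 + ((q:ℕ) : ZMod f)) ≠ 1 := by
    refine ⟨(i₂ - (i + 1)).val, ?_⟩
    rw [ZMod.natCast_zmod_val]
    simpa using hi₂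
  set e := Nat.find hQex with he
  have hespec : k (i + 1 + ((e:ℕ) : ZMod f)) ≠ 1 := Nat.find_spec hQex
  have hemin : ∀ q : ℕ, q < e → k (i + 1 + ((q:ℕ) : ZMod f)) = 1 := by
    intro q hq
    have := Nat.find_min hQex hq
    simpa using this
  have he1 : 1 ≤ e := by
    rcases Nat.eq_zero_or_pos e with h|h
    · exfalso; apply hespec; rw [h]; simpa using hi
    · exact h
  set s := m - 1 + e with hs
  have hs1 : 1 ≤ s := by omega
  have hrun : ∀ j : ℕ, 1 ≤ j → j ≤ s → k (ν + ((j:ℕ) : ZMod f)) = 1 := by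
    intro j hj1 hjs
    rcases le_or_gt j (m-1) with hcase|hcase
    · have hjm : j ≤ m := by omega
      have hpos : ν + ((j:ℕ) : ZMod f) = i + 1 - (((m - j : ℕ) : ℕ) : ZMod f) := by
        rw [hν, Nat.cast_sub hjm]
        ring
      rw [hpos]
      exact hmmin (m - j) (by omega)
    · have hmj : m ≤ j := by omega
      have hpos : ν + ((j:ℕ) : ZMod f) = i + 1 + (((j - m : ℕ) : ℕ) : ZMod f) := by
        rw [hν, Nat.cast_sub hmj]
        ring
      rw [hpos]
      exact hemin (j - m) (by omega)
  have hkν : k ν ≠ 1 := hmspec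
  have hkend : k (ν + (((s+1 : ℕ)) : ZMod f)) ≠ 1 := by
    have hpos : ν + (((s+1:ℕ)) : ZMod f) = i + 1 + ((e : ℕ) : ZMod f) := by
      rw [hν, show s + 1 = e + m by omega, Nat.cast_add]
      ring
    rw [hpos]
    exact hespec
  have hsf : s + 1 ≤ f := by
    by_contra hcon
    push_neg at hcon
    have hfs : 1 ≤ f ∧ f ≤ s := by omega
    have := hrun f hfs.1 hfs.2
    rw [ZMod.natCast_self, add_zero] at this
    exact hkν this
  have hiν : i = ν + (((m-1:ℕ)) : ZMod f) := by
    rw [hν, Nat.cast_sub hm1]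
    push_cast
    ring
  -- apply block_zero
  have hend : z (ν + ((s:ℕ) : ZMod f)) = 0 := by
    apply zend
    · exact hrun s hs1 le_rfl
    · have : (ν + ((s:ℕ) : ZMod f)) + 1 = ν + (((s+1:ℕ)) : ZMod f) := by push_cast; ring
      rw [this]
      exact hkend
  have habs2 : ∀ x y : ℤ, |x| ≤ 1 → |y| ≤ 1 → |y - x| ≤ 2 := by
    intro x y hx hy; rw [abs_le] at *; omega
  have hint : ∀ u : ℕ, 1 ≤ u → u ≤ s - 1 → |z (ν + ((u:ℕ) : ZMod f))| ≤ 2 := by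
    intro u hu1 hu2
    have hsucc : (ν + ((u:ℕ) : ZMod f)) + 1 = ν + (((u+1:ℕ)) : ZMod f) := by push_cast; ring
    rw [zint _ (hrun u hu1 (by omega)) (by rw [hsucc]; exact hrun (u+1) (by omega) (by omega))]
    exact habs2 _ _ (hdabs _) (hdabs _)
  obtain ⟨hintzero, g, hgabs, hzν⟩ :=
    block_zero p f hp3 hf z hz0 (fun x => hzbd p f hp3 k hk J' JTh x) ν s hs1 hsf hend hint
  -- k ν ≥ 3
  have hkν1 : k (ν + 1) = 1 := by
    have := hrun 1 le_rfl hs1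
    rwa [Nat.cast_one] at this
  have hkν3 : 3 ≤ k ν := by
    obtain ⟨h1, _⟩ := hk ν
    have h2 := h21 ν
    have h3 : k ν ≠ 2 := fun hc => h2 ⟨hc, hkν1⟩
    omega
  -- the nu case
  have hzν' : (a ν - bb ν) * (k ν - 2) + (1 - 2 * bb ν) + (a (ν+1) - bb (ν+1)) = (p:ℤ) * g := by
    have h4 := znu ν hkν hkν1
    rw [h4] at hzν
    rw [← hdab, ← hdab]
    linarith [hzν]
  obtain ⟨hEq1, hNe1⟩ := nu_case p hp3 (k ν) (a ν) (bb ν) (a (ν+1)) (bb (ν+1)) g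
    hkν3 (hk ν).2 (habit ν) (hbbit ν) (habit (ν+1)) (hbbit (ν+1)) hgabs hzν'
  have hdν1 : d (ν + 1) ≠ 0 := by
    rw [hdab]; intro hc; exact hNe1 (by linarith)
  -- propagate d along the run
  have dconst : ∀ u : ℕ, 1 ≤ u → u ≤ s → d (ν + ((u:ℕ) : ZMod f)) = d (ν + 1) := by
    intro u
    induction u with
    | zero => omega
    | succ u ih =>
      intro _ hus
      rcases Nat.eq_zero_or_pos u with h|hu1
      · subst h; rw [Nat.cast_one]
      · have hz4 := hintzero u hu1 (by omega)
        have hsucc : (ν + ((u:ℕ) : ZMod f)) + 1 = ν + (((u+1:ℕ)) : ZMod f) := by push_cast; ring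
        rw [zint _ (hrun u hu1 (by omega)) (by rw [hsucc]; exact hrun (u+1) (by omega) (by omega))] at hz4
        rw [hsucc] at hz4
        have h5 : d (ν + (((u+1:ℕ)) : ZMod f)) = d (ν + ((u:ℕ) : ZMod f)) := by linarith
        rw [h5]
        exact ih hu1 (by omega)
  -- conclude
  rcases Nat.eq_or_lt_of_le hm1 with hm2|hm2
  · -- m = 1 : i = ν
    have hiν' : i = ν := by
      rw [hiν, show m - 1 = 0 by omega]
      simp
    rw [hiν', hEq1]
  · -- m ≥ 2 : interior
    set u := m - 1 with hu
    have hu1 : 1 ≤ u := by omega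
    have hus : u ≤ s - 1 := by omega
    have hiu : i = ν + ((u:ℕ) : ZMod f) := hiν
    have hsucc : i + 1 = ν + (((u+1:ℕ)) : ZMod f) := by rw [hiu]; push_cast; ring
    have hd1 : d (ν + ((u:ℕ) : ZMod f)) = d (ν + 1) := dconst u hu1 (by omega)
    have hd2 : d (ν + (((u+1:ℕ)) : ZMod f)) = d (ν + 1) := dconst (u+1) (by omega) (by omega)
    rw [hsucc, hiu]
    have hb1 := habit (ν + ((u:ℕ) : ZMod f))
    have hb2 := habit (ν + (((u+1:ℕ)) : ZMod f))
    have hc1 := hbbit (ν + ((u:ℕ) : ZMod f))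
    have hc2 := hbbit (ν + (((u+1:ℕ)) : ZMod f))
    have he1' := hdab (ν + ((u:ℕ) : ZMod f))
    have he2' := hdab (ν + (((u+1:ℕ)) : ZMod f))
    rw [hd1] at he1'
    rw [hd2] at he2'
    have hdd := hdabs (ν + 1)
    rw [abs_le] at hdd
    omega


end SigAux

/-- Proposition 5.9 of the paper: if the `J′`- and `J^Θ`-congruences hold, then there is a
subset `J` agreeing with `J′` outside `J₀` such that the irregular-weight congruences hold. -/
theorem stmt6 (p f : ℕ) (hp : p.Prime) (hodd : Odd p) (hf : 1 ≤ f)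
    (k : ZMod f → ℤ)
    (hk : ∀ i, 1 ≤ k i ∧ k i ≤ (p : ℤ))
    (hone : ∃ i, k i = 1) (hnotone : ∃ i, k i ≠ 1)
    (h21 : ∀ i, ¬(k i = 2 ∧ k (i + 1) = 1))
    (J' JTh : Set (ZMod f))
    (hs : Int.ModEq ((p : ℤ) ^ f - 1)
      (Sig p f (sW f (bp1 p f k) (zero2 f) J'))
      (Sig p f (sW f (bth1 p f k) (bth2 f k) JTh)))
    (ht : Int.ModEq ((p : ℤ) ^ f - 1)
      (Sig p f (tW f (bp1 p f k) (zero2 f) J'))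
      (Sig p f (tW f (bth1 p f k) (bth2 f k) JTh))) :
    ∃ J : Set (ZMod f),
      (∀ i, k i ≠ 1 → (i ∈ J ↔ i ∈ J')) ∧
      Int.ModEq ((p : ℤ) ^ f - 1)
        (Sig p f (sW f (b1 f k) (zero2 f) J)) (Sig p f (sW f (bp1 p f k) (zero2 f) J')) ∧
      Int.ModEq ((p : ℤ) ^ f - 1)
        (Sig p f (tW f (b1 f k) (zero2 f) J)) (Sig p f (tW f (bp1 p f k) (zero2 f) J')) := by
  haveI : NeZero f := ⟨by omega⟩
  have hp2 : p ≠ 2 := by rintro rfl; exact absurd hodd (by decide)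
  have hp3 : 3 ≤ (p:ℤ) := by
    have h2 := hp.two_le
    have h3 : 3 ≤ p := by omega
    exact_mod_cast h3
  set N : ℤ := (p:ℤ)^f - 1 with hN
  set z := SigAux.zFun p f k J' JTh with hzdef
  set w := SigAux.wFun f k J' JTh with hwdef
  have hdiff : Sig p f (sW f (bp1 p f k) (zero2 f) J')
      - Sig p f (sW f (bth1 p f k) (bth2 f k) JTh) = Sig p f z + N * w 0 := by
    rw [SigAux.Sig_sub]
    have hfe : (fun i => sW f (bp1 p f k) (zero2 f) J' i - sW f (bth1 p f k) (bth2 f k) JTh i)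
        = fun i => z i + ((p:ℤ) * w i - w (i+1)) := by
      funext i; exact SigAux.hpoint p f k J' JTh i
    rw [hfe, SigAux.Sig_add p f z (fun i => (p:ℤ) * w i - w (i+1)), SigAux.Sig_carry p f hf w]
  have hdvd1 : N ∣ Sig p f z := by
    have h1 : N ∣ (Sig p f (sW f (bp1 p f k) (zero2 f) J')
        - Sig p f (sW f (bth1 p f k) (bth2 f k) JTh)) := Int.ModEq.dvd hs.symm
    have h2 : Sig p f z = (Sig p f (sW f (bp1 p f k) (zero2 f) J')
        - Sig p f (sW f (bth1 p f k) (bth2 f k) JTh)) - N * w 0 := by linarith [hdiff]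
    rw [h2]
    exact dvd_sub h1 (Dvd.intro _ rfl)
  have hz0 : Int.ModEq N (Sig p f z) 0 := (Int.modEq_zero_iff_dvd).mpr hdvd1
  have key : ∀ i, k (i+1) = 1 → SigAux.aI f J' i = SigAux.aI f J' (i+1) :=
    SigAux.main_key p f hp3 hf k hk hnotone h21 J' JTh hz0
  refine ⟨J', fun i _ => Iff.rfl, ?_, ?_⟩
  · have hpt : (fun i => sW f (bp1 p f k) (zero2 f) J' i - sW f (b1 f k) (zero2 f) J' i)
        = fun i => SigAux.aI f J' i * (bp1 p f k i - b1 f k i) := by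
      funext i
      by_cases h : i ∈ J' <;> simp [sW, zero2, SigAux.aI, h]
    have h3 : Sig p f (sW f (bp1 p f k) (zero2 f) J') - Sig p f (sW f (b1 f k) (zero2 f) J')
        = N * (if k 0 = 1 then SigAux.aI f J' 0 else 0) := by
      rw [SigAux.Sig_sub, hpt,
        SigAux.key2 p f hf k (SigAux.aI f J') (fun i h => (key i h).symm)]
    exact Int.modEq_iff_dvd.mpr ⟨if k 0 = 1 then SigAux.aI f J' 0 else 0, by linarith [h3]⟩
  · have hpt : (fun i => tW f (bp1 p f k) (zero2 f) J' i - tW f (b1 f k) (zero2 f) J' i)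
        = fun i => (1 - SigAux.aI f J' i) * (bp1 p f k i - b1 f k i) := by
      funext i
      by_cases h : i ∈ J' <;> simp [tW, zero2, SigAux.aI, h]
    have h3 : Sig p f (tW f (bp1 p f k) (zero2 f) J') - Sig p f (tW f (b1 f k) (zero2 f) J')
        = N * (if k 0 = 1 then 1 - SigAux.aI f J' 0 else 0) := by
      rw [SigAux.Sig_sub, hpt,
        SigAux.key2 p f hf k (fun i => 1 - SigAux.aI f J' i) (fun i h => by show 1 - SigAux.aI f J' (i+1) = 1 - SigAux.aI f J' i; rw [key i h])]
    exact Int.modEq_iff_dvd.mpr ⟨if k 0 = 1 then 1 - SigAux.aI f J' 0 else 0, by linarith [h3]⟩
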